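/- arXiv:2603.17537 — 2 statements merged into one kernel-verified Lean document; each statement's English description precedes it below -/
import Mathlib

section
/- (Border via LCE.) Let 1 ≤ i ≤ n, let m = λ⁻¹[i], and let z = x[i..i+m−1] be the maximal inverse Lyndon subword starting at i. Assume i + m − 1 < n, and let j = min{j' ∈ (i,n] : x_{j'} ≻ x_i} (which exists). Then lce(i,j) = border(z). -/
namespace LynArr

variable {α : Type*} [LinearOrder α]

/-- Strict lexicographic order on words:
`u ≺ v` iff `u` is a proper prefix of `v`, or at the first differing position `u` is smaller. -/
def Llt (u v : List α) : Prop := List.Lex (· < ·) u v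

/-- The suffix `x_i = x[i..n]` (1-based indexing). -/
def suff (x : List α) (i : ℕ) : List α := x.drop (i - 1)

/-- The subword `x[i..j]` (1-based, inclusive). -/
def sub (x : List α) (i j : ℕ) : List α := (x.drop (i - 1)).take (j - i + 1)

/-- `w` is a Lyndon word: nonempty and lexicographically smaller than
all of its nonempty proper suffixes. -/
def IsLyndon (w : List α) : Prop :=
  w ≠ [] ∧ ∀ k, 0 < k → k < w.length → Llt w (w.drop k)

/-- `w` is an inverse Lyndon word: nonempty and lexicographically greater than
all of its nonempty proper suffixes. -/
def IsInvLyndon (w : List α) : Prop :=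
  w ≠ [] ∧ ∀ k, 0 < k → k < w.length → Llt (w.drop k) w

/-- `lce x i j`: the length of the longest common prefix of the suffixes `x_i` and `x_j`. -/
def lce (x : List α) (i j : ℕ) : ℕ :=
  (((suff x i).zip (suff x j)).takeWhile fun p => p.1 == p.2).length

set_option linter.unusedSectionVars false

/-- Lex from an agreement of prefixes plus a smaller character. -/
theorem lex_of_take_getElem : ∀ (t : ℕ) (u v : List α), u.take t = v.take t →
    ∀ (hu : t < u.length) (hv : t < v.length), u[t] < v[t] → List.Lex (· < ·) u v := by
  intro t
  induction t with
  | zero =>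
    intro u v _ hu hv hlt
    match u, v with
    | a :: u', b :: v' => exact List.Lex.rel hlt
  | succ t ih =>
    intro u v htake hu hv hlt
    match u, v with
    | a :: u', b :: v' =>
      simp only [List.take_succ_cons, List.cons.injEq] at htake
      obtain ⟨rfl, h2⟩ := htake
      exact List.Lex.cons (ih u' v' h2 (by simpa using hu) (by simpa using hv) (by simpa using hlt))

/-- Along a Lex pair, at any position where the prefixes agree, chars are ≤. -/
theorem lex_getElem_le : ∀ (t : ℕ) (u v : List α), List.Lex (· < ·) u v →
    u.take t = v.take t → ∀ (hu : t < u.length) (hv : t < v.length), u[t] ≤ v[t] := by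
  intro t
  induction t with
  | zero =>
    intro u v hlex _ hu hv
    match u, v with
    | a :: u', b :: v' =>
      cases hlex with
      | rel h => exact le_of_lt h
      | cons h => exact le_refl _ |>.trans (le_refl _)
  | succ t ih =>
    intro u v hlex htake hu hv
    match u, v with
    | a :: u', b :: v' =>
      simp only [List.take_succ_cons, List.cons.injEq] at htake
      obtain ⟨rfl, h2⟩ := htake
      cases hlex with
      | rel h => exact absurd h (lt_irrefl _)
      | cons h => exact ih u' v' h h2 (by simpa using hu) (by simpa using hv)

theorem lex_asymm : ∀ (u v : List α), List.Lex (· < ·) u v → List.Lex (· < ·) v u → False := by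
  intro u v h
  induction h with
  | nil => intro h2; cases h2
  | rel h => intro h2; cases h2 with
    | rel h3 => exact absurd (h.trans h3) (lt_irrefl _)
    | cons _ => exact absurd h (lt_irrefl _)
  | cons h ih => intro h2; cases h2 with
    | rel h3 => exact absurd h3 (lt_irrefl _)
    | cons h3 => exact ih h3

theorem lex_total : ∀ (u v : List α), u ≠ v → List.Lex (· < ·) u v ∨ List.Lex (· < ·) v u := by
  intro u
  induction u with
  | nil => intro v hv; cases v with
    | nil => exact absurd rfl hv
    | cons b v' => exact Or.inl List.Lex.nil
  | cons a u' ih =>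
    intro v hv
    cases v with
    | nil => exact Or.inr List.Lex.nil
    | cons b v' =>
      rcases lt_trichotomy a b with h | rfl | h
      · exact Or.inl (List.Lex.rel h)
      · rcases ih v' (by intro h; apply hv; rw [h]) with h | h
        · exact Or.inl (List.Lex.cons h)
        · exact Or.inr (List.Lex.cons h)
      · exact Or.inr (List.Lex.rel h)

/-- Decomposition of a Lex pair: proper prefix, or first-difference position. -/
theorem lex_rec : ∀ (u v : List α), List.Lex (· < ·) u v →
    (v.take u.length = u ∧ u.length < v.length) ∨
    ∃ t, ∃ (hu : t < u.length) (hv : t < v.length),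
      u.take t = v.take t ∧ u[t] < v[t] := by
  intro u v h
  induction h with
  | @nil b l => left; simp
  | @rel a u' b v' h => right; exact ⟨0, by simp, by simp, by simp, by simpa using h⟩
  | @cons a u' v' h ih =>
    rcases ih with ⟨h1, h2⟩ | ⟨t, hu, hv, h1, h2⟩
    · left
      constructor
      · simpa using h1
      · simpa using h2
    · right
      exact ⟨t + 1, by simpa using hu, by simpa using hv, by simpa using h1,
        by simpa using h2⟩

theorem lex_of_proper_prefix (u v : List α) (h1 : v.take u.length = u)
    (h2 : u.length < v.length) : List.Lex (· < ·) u v := by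
  induction u generalizing v with
  | nil => cases v with
    | nil => simp at h2
    | cons b v' => exact List.Lex.nil
  | cons a u' ih =>
    cases v with
    | nil => simp at h2
    | cons b v' =>
      simp only [List.length_cons, List.take_succ_cons, List.cons.injEq] at h1 h2
      obtain ⟨rfl, h1⟩ := h1
      exact List.Lex.cons (ih v' h1 (by omega))

theorem length_takeWhile_eq {β : Type*} (q : β → Bool) (l : List β) (b : ℕ) (hb : b < l.length)
    (h1 : ∀ t (ht : t < b), q (l[t]'(by omega)) = true)
    (h2 : q (l[b]) = false) : (l.takeWhile q).length = b := by
  induction b generalizing l with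
  | zero =>
    cases l with
    | nil => simp at hb
    | cons a l' => simp only [List.getElem_cons_zero] at h2; simp [List.takeWhile_cons, h2]
  | succ b ih =>
    cases l with
    | nil => simp at hb
    | cons a l' =>
      have ha : q a = true := h1 0 (by omega)
      simp only [List.takeWhile_cons, ha, if_true, List.length_cons]
      rw [ih l' (by simpa using hb) (fun t ht => h1 (t+1) (by omega)) (by simpa using h2)]

theorem getElem_idx_congr (l : List α) {i j : ℕ} (h : i = j) (hj : j < l.length) :
    l[i]'(by omega) = l[j] := by subst h; rfl

/-- Lemma A: for an inverse Lyndon word, the char after a longer border is ≤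
the char after a shorter border. -/
theorem lemA (z : List α) (l b : ℕ) (hIL : IsInvLyndon z) (hlb : l < b) (hbm : b < z.length)
    (hl : z.take l = z.drop (z.length - l)) (hb : z.take b = z.drop (z.length - b)) :
    z[b] ≤ z[l]'(by omega) := by
  have hd0 : 0 < b - l := by omega
  have hdm : b - l < z.length := by omega
  have hlen : l < (z.drop (b - l)).length := by rw [List.length_drop]; omega
  have h1 : (z.drop (b - l)).take l = z.take l := by
    rw [hl, show z.length - l = (z.length - b) + (b - l) from by omega, ← List.drop_drop,
      ← hb, List.drop_take, show b - (b - l) = l from by omega]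
  have h2 : (z.drop (b - l))[l]'hlen = z[b] := by
    rw [List.getElem_drop]
    exact getElem_idx_congr z (by omega) hbm
  have hlex := hIL.2 (b - l) hd0 hdm
  rw [← h2]
  exact lex_getElem_le l (z.drop (b - l)) z hlex h1 hlen (by omega)

/-- Lemma C1: if z is inverse Lyndon, z++[a] is not, and b is the longest border of z,
then z[b] < a. -/
theorem lemC1 (z : List α) (a : α) (b : ℕ) (hIL : IsInvLyndon z)
    (hnx : ¬ IsInvLyndon (z ++ [a])) (hb1 : b < z.length)
    (hb2 : z.take b = z.drop (z.length - b))
    (hb3 : ∀ b', b' < z.length → z.take b' = z.drop (z.length - b') → b' ≤ b) :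
    z[b] < a := by
  have hm0 : 0 < z.length := by omega
  rw [IsInvLyndon] at hnx
  push_neg at hnx
  obtain ⟨k, hk0, hkw, hk⟩ := hnx (by simp)
  rw [List.length_append, List.length_singleton] at hkw
  have hkm : k ≤ z.length := by omega
  have hwd : (z ++ [a]).drop k = z.drop k ++ [a] := List.drop_append_of_le_length hkm
  have hdl : ((z ++ [a]).drop k).length = z.length + 1 - k := by
    rw [List.length_drop, List.length_append, List.length_singleton]
  have hne : (z ++ [a]).drop k ≠ (z ++ [a]) := by
    intro h
    have := congrArg List.length h
    rw [hdl, List.length_append, List.length_singleton] at this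
    omega
  have hlex : List.Lex (· < ·) (z ++ [a]) ((z ++ [a]).drop k) := by
    rcases lex_total ((z ++ [a]).drop k) (z ++ [a]) hne with h | h
    · exact absurd h hk
    · exact h
  rcases lex_rec (z ++ [a]) ((z ++ [a]).drop k) hlex with ⟨_, hlt⟩ | ⟨t, hu, hv, hagree, hlt⟩
  · rw [hdl, List.length_append, List.length_singleton] at hlt; omega
  · rw [hdl] at hv
    have hdzl : (z.drop k).length = z.length - k := List.length_drop
    -- t cannot be < z.length - k
    have htmk : ¬ t < z.length - k := by
      intro ht
      have hkmlt : k < z.length := by omega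
      have hzagree : z.take t = (z.drop k).take t := by
        have e1 : (z ++ [a]).take t = z.take t := List.take_append_of_le_length (by omega)
        have e2 : ((z ++ [a]).drop k).take t = (z.drop k).take t := by
          rw [hwd]
          exact List.take_append_of_le_length (by omega)
        rw [e1, e2] at hagree
        exact hagree
      have hchar : z[t]'(by omega) < (z.drop k)[t]'(by omega) := by
        have e1 : (z ++ [a])[t]'hu = z[t]'(by omega) := List.getElem_append_left (by omega)
        have e2 : ((z ++ [a]).drop k)[t]'(by omega) = (z.drop k)[t]'(by omega) := by
          rw [List.getElem_of_eq hwd]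
          exact List.getElem_append_left (by omega)
        rw [e1, e2] at hlt
        exact hlt
      exact lex_asymm _ _ (lex_of_take_getElem t z (z.drop k) hzagree (by omega)
        (by omega) hchar) (hIL.2 k hk0 hkmlt)
    have htk : t = z.length - k := by omega
    have hlm : t < z.length := by omega
    -- border of length t
    have hborder : z.take t = z.drop (z.length - t) := by
      have e1 : (z ++ [a]).take t = z.take t := List.take_append_of_le_length (by omega)
      have e2 : ((z ++ [a]).drop k).take t = z.drop k := by
        rw [hwd, List.take_append_of_le_length (by omega), List.take_of_length_le (by omega)]
      rw [e1, e2] at hagree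
      rw [hagree, show z.length - t = k from by omega]
    -- the char inequality z[t] < a
    have hchar : z[t]'hlm < a := by
      have e1 : (z ++ [a])[t]'hu = z[t]'hlm := List.getElem_append_left (by omega)
      have e2 : ((z ++ [a]).drop k)[t]'(by omega) = a := by
        rw [List.getElem_of_eq hwd, List.getElem_append_right (by omega)]
        exact (getElem_idx_congr [a] (show t - (z.drop k).length = 0 by omega) (by simp)).trans
          (List.getElem_cons_zero _ _ _)
      rw [e1, e2] at hlt
      exact hlt
    rcases eq_or_lt_of_le (hb3 t hlm hborder) with heq | hllt
    · exact lt_of_le_of_lt (le_of_eq (getElem_idx_congr z heq hb1).symm) hchar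
    · exact lt_of_le_of_lt (lemA z t b hIL hllt hb1 hborder hb2) hchar

/-- Lower bound: no suffix p.drop k with 0 < k < m - b can dominate p
when b is the longest border of p.take m. -/
theorem lemLB (p : List α) (m b k : ℕ) (hmp : m < p.length)
    (hIL : IsInvLyndon (p.take m))
    (hb3 : ∀ b', b' < m → (p.take m).take b' = (p.take m).drop (m - b') → b' ≤ b)
    (hk0 : 0 < k) (hkl : k < m - b) (hlex : List.Lex (· < ·) p (p.drop k)) : False := by
  have hzl : (p.take m).length = m := by rw [List.length_take]; omega
  have hkm : k < m := by omega
  have hlexz := hIL.2 k hk0 (by omega)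
  have hdl : ((p.take m).drop k).length = m - k := by rw [List.length_drop, hzl]
  rcases lex_rec ((p.take m).drop k) (p.take m) hlexz with ⟨hpre, _⟩ | ⟨t, hu, hv, hagree, hlt⟩
  · have : m - k ≤ b := by
      apply hb3 (m - k) (by omega)
      rw [show m - (m - k) = k from by omega, ← hpre, hdl]
    omega
  · rw [hzl] at hv
    rw [hdl] at hu
    apply lex_asymm p (p.drop k) hlex
    apply lex_of_take_getElem t (p.drop k) p _ (by rw [List.length_drop]; omega) (by omega)
    · -- chars
      have e1 : ((p.take m).drop k)[t]'(by omega) = (p.drop k)[t]'(by rw [List.length_drop]; omega) := by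
        rw [List.getElem_drop, List.getElem_take, List.getElem_drop]
      have e2 : (p.take m)[t]'(by omega) = p[t]'(by omega) := List.getElem_take
      rw [e1, e2] at hlt
      exact hlt
    · -- take agreement
      have e1 : ((p.take m).drop k).take t = (p.drop k).take t := by
        rw [List.drop_take, List.take_take, min_eq_left (by omega)]
      have e2 : (p.take m).take t = p.take t := by
        rw [List.take_take, min_eq_left (by omega)]
      rw [e1, e2] at hagree
      exact hagree

/-- Border via LCE: if `z = x[i..i+m-1]` is the maximal inverse Lyndon subword starting
at `i`, `z` is a proper prefix of `x_i`, `b = border(z)`, and `j = next₋₁[i]` is the smallest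
`j' ∈ (i, n]` with `x_{j'} ≻ x_i`, then `lce(i, j) = border(z)`. -/
theorem border_eq_lce {α : Type*} [LinearOrder α] (x : List α) (n i m b j : ℕ)
    (hn : n = x.length) (hi1 : 1 ≤ i) (hin : i ≤ n)
    (hm1 : 1 ≤ m) (hm2 : m ≤ n - i + 1)
    (hIL : IsInvLyndon (sub x i (i + m - 1)))
    (hmax : ∀ m', m < m' → m' ≤ n - i + 1 → ¬ IsInvLyndon (sub x i (i + m' - 1)))
    (hproper : i + m - 1 < n)
    (hb1 : b < (sub x i (i + m - 1)).length)
    (hb2 : (sub x i (i + m - 1)).take b =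
      (sub x i (i + m - 1)).drop ((sub x i (i + m - 1)).length - b))
    (hb3 : ∀ b', b' < (sub x i (i + m - 1)).length →
      (sub x i (i + m - 1)).take b' =
        (sub x i (i + m - 1)).drop ((sub x i (i + m - 1)).length - b') → b' ≤ b)
    (hj : IsLeast {j' | i < j' ∧ j' ≤ n ∧ Llt (suff x i) (suff x j')} j) :
    lce x i j = b := by
  have hpl : (x.drop (i - 1)).length = n - i + 1 := by rw [List.length_drop, ← hn]; omega
  have hmp : m < (x.drop (i - 1)).length := by omega
  have hsub : sub x i (i + m - 1) = (x.drop (i - 1)).take m := by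
    unfold sub; rw [show (i + m - 1) - i + 1 = m from by omega]
  have hzlen : (sub x i (i + m - 1)).length = m := by
    rw [hsub, List.length_take]; omega
  rw [hzlen] at hb1 hb2 hb3
  rw [hsub] at hIL hb2 hb3
  -- the letter following z in x_i
  have hnx : ¬ IsInvLyndon ((x.drop (i - 1)).take m ++ [(x.drop (i - 1))[m]'hmp]) := by
    have h1 := hmax (m + 1) (by omega) (by omega)
    have h2 : sub x i (i + (m + 1) - 1) = (x.drop (i - 1)).take (m + 1) := by
      unfold sub; rw [show (i + (m + 1) - 1) - i + 1 = m + 1 from by omega]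
    have h3 : (x.drop (i - 1)).take (m + 1) =
        (x.drop (i - 1)).take m ++ [(x.drop (i - 1))[m]'hmp] := by
      rw [List.take_succ, List.getElem?_eq_getElem hmp]; rfl
    rw [h2, h3] at h1
    exact h1
  have hztl : ((x.drop (i - 1)).take m).length = m := by rw [List.length_take]; omega
  -- key character inequality
  have hkey : (x.drop (i - 1))[b]'(by omega) < (x.drop (i - 1))[m]'hmp := by
    have := lemC1 ((x.drop (i - 1)).take m) ((x.drop (i - 1))[m]'hmp) b hIL hnx
      (by omega) (by rw [hztl]; exact hb2)
      (by intro b' h1' h2'; rw [hztl] at h1' h2'; exact hb3 b' h1' h2')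
    rw [List.getElem_take] at this
    exact this
  -- the take-agreement between p and p.drop (m - b)
  have hagree : (x.drop (i - 1)).take b = ((x.drop (i - 1)).drop (m - b)).take b := by
    have h1 : ((x.drop (i - 1)).take m).take b = (x.drop (i - 1)).take b := by
      rw [List.take_take, min_eq_left (by omega)]
    have h2 : ((x.drop (i - 1)).take m).drop (m - b) =
        ((x.drop (i - 1)).drop (m - b)).take b := by
      rw [List.drop_take, show m - (m - b) = b from by omega]
    rw [← h1, ← h2, hb2]
  have hdroplen : ((x.drop (i - 1)).drop (m - b)).length = (x.drop (i - 1)).length - (m - b) :=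
    List.length_drop
  have hbdrop : b < ((x.drop (i - 1)).drop (m - b)).length := by omega
  have hdelem : ((x.drop (i - 1)).drop (m - b))[b]'hbdrop = (x.drop (i - 1))[m]'hmp := by
    rw [List.getElem_drop]
    exact getElem_idx_congr _ (by omega) hmp
  -- membership Lex
  have hmem : List.Lex (· < ·) (x.drop (i - 1)) ((x.drop (i - 1)).drop (m - b)) := by
    apply lex_of_take_getElem b _ _ hagree (by omega) hbdrop
    rw [hdelem]
    exact hkey
  -- IsLeast for i + (m - b)
  have hleast : IsLeast {j' | i < j' ∧ j' ≤ n ∧ Llt (suff x i) (suff x j')} (i + (m - b)) := by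
    constructor
    · refine ⟨by omega, by omega, ?_⟩
      show Llt (x.drop (i - 1)) (x.drop (i + (m - b) - 1))
      rw [show i + (m - b) - 1 = (i - 1) + (m - b) from by omega, ← List.drop_drop]
      exact hmem
    · intro j' hj'
      obtain ⟨h1, h2, h3⟩ := hj'
      by_contra hcon
      push_neg at hcon
      have h4 : Llt (x.drop (i - 1)) ((x.drop (i - 1)).drop (j' - i)) := by
        have : x.drop (j' - 1) = (x.drop (i - 1)).drop (j' - i) := by
          rw [List.drop_drop, show (i - 1) + (j' - i) = j' - 1 from by omega]
        rw [← this]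
        exact h3
      exact lemLB (x.drop (i - 1)) m b (j' - i) hmp hIL
        (by intro b' h1' h2'; exact hb3 b' h1' h2') (by omega) (by omega) h4
  have hjeq : j = i + (m - b) := hj.unique hleast
  -- compute the lce
  have hsj : suff x j = (x.drop (i - 1)).drop (m - b) := by
    rw [hjeq]
    show x.drop (i + (m - b) - 1) = _
    rw [show i + (m - b) - 1 = (i - 1) + (m - b) from by omega, ← List.drop_drop]
  unfold lce
  rw [hsj]
  show ((((x.drop (i-1))).zip ((x.drop (i - 1)).drop (m - b))).takeWhile
    fun p => p.1 == p.2).length = b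
  have hziplen : ((x.drop (i-1)).zip ((x.drop (i - 1)).drop (m - b))).length =
      (x.drop (i - 1)).length - (m - b) := by
    rw [List.length_zip, hdroplen]
    omega
  apply length_takeWhile_eq _ _ b (by omega)
  · intro t ht
    have htl : t < (x.drop (i - 1)).length := by omega
    have htd : t < ((x.drop (i - 1)).drop (m - b)).length := by omega
    have heq : (x.drop (i - 1))[t]'htl = ((x.drop (i - 1)).drop (m - b))[t]'htd := by
      have := List.getElem_of_eq hagree (show t < ((x.drop (i-1)).take b).length by
        rw [List.length_take]; omega)
      rw [List.getElem_take, List.getElem_take] at this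
      exact this
    rw [List.getElem_zip]
    simpa using heq
  · rw [List.getElem_zip]
    simp only
    rw [hdelem]
    simpa using (ne_of_lt hkey)

end LynArr
end

section
/- (Compatibility property of the Lyndon array.) For indices i, j ∈ [1,n], let w_λ(i) = x[i..i+λ[i]−1] denote the maximal Lyndon subword of x starting at i, where λ[i] is the largest m ∈ [1, n−i+1] such that x[i..i+m−1] is a Lyndon word. If w_λ(i) ≺ w_λ(j), then x_i ≺ x_j. -/
namespace LynArr

variable {α : Type*} [LinearOrder α]

/-! ### Auxiliary lemmas -/

lemma llt_trans : ∀ {a b c : List α}, Llt a b → Llt b c → Llt a c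
  | _, _, _, .nil, .cons _ => .nil
  | _, _, _, .nil, .rel _ => .nil
  | _, _, _, .cons h1, .cons h2 => .cons (llt_trans h1 h2)
  | _, _, _, .cons _, .rel h2 => .rel h2
  | _, _, _, .rel h1, .cons _ => .rel h1
  | _, _, _, .rel h1, .rel h2 => .rel (lt_trans h1 h2)

lemma llt_irrefl : ∀ (a : List α), ¬ Llt a a
  | _ :: _, .cons h => llt_irrefl _ h
  | _ :: _, .rel h => lt_irrefl _ h

/-- Strip a common prefix from a lexicographic comparison. -/
lemma llt_append_left_iff (c : List α) {u v : List α} :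
    Llt (c ++ u) (c ++ v) ↔ Llt u v := by
  induction c with
  | nil => rfl
  | cons a c ih =>
    simp only [List.cons_append]
    exact (List.lex_cons_iff).trans ih

/-- Mismatch extension: if `a < b` then `c++a::A ≺ c++b::B`. -/
lemma llt_ext {a b : α} (h : a < b) (c A B : List α) :
    Llt (c ++ a :: A) (c ++ b :: B) :=
  List.Lex.append_left _ (List.Lex.rel h) c

/-- A word is smaller than any proper extension of itself. -/
lemma llt_append_cons (u : List α) (b : α) (w : List α) : Llt u (u ++ b :: w) := by
  have := List.Lex.append_left (· < ·) (List.Lex.nil (a := b) (l := w)) u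
  simpa only [List.append_nil, Llt] using this

/-- Decomposition of a lexicographic comparison: either a proper prefix or a mismatch. -/
lemma llt_decomp {u v : List α} (h : Llt u v) :
    (∃ b w, v = u ++ b :: w) ∨
      (∃ c a b u' v', a < b ∧ u = c ++ a :: u' ∧ v = c ++ b :: v') := by
  induction h with
  | nil => exact Or.inl ⟨_, _, rfl⟩
  | @cons a l₁ l₂ h ih =>
    rcases ih with ⟨b, w, rfl⟩ | ⟨c, a', b', u', v', hab, rfl, rfl⟩
    · exact Or.inl ⟨b, w, rfl⟩
    · exact Or.inr ⟨a :: c, a', b', u', v', hab, rfl, rfl⟩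
  | @rel a₁ l₁ a₂ l₂ h => exact Or.inr ⟨[], a₁, a₂, l₁, l₂, h, rfl, rfl⟩

/-- If `u ≺ w` and `w` is no longer than `u`, the comparison is a mismatch, so it
survives arbitrary extensions of both words. -/
lemma llt_append_of_llt_of_le {u w : List α} (h : Llt u w) (hlen : w.length ≤ u.length)
    (A B : List α) : Llt (u ++ A) (w ++ B) := by
  rcases llt_decomp h with ⟨b, w', rfl⟩ | ⟨c, a, b, u', v', hab, rfl, rfl⟩
  · exfalso; simp only [List.length_append, List.length_cons] at hlen; omega
  · simp only [List.append_assoc, List.cons_append]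
    exact llt_ext hab _ _ _

lemma llt_trichotomy : ∀ (a b : List α), Llt a b ∨ a = b ∨ Llt b a
  | [], [] => Or.inr (Or.inl rfl)
  | [], _ :: _ => Or.inl List.Lex.nil
  | _ :: _, [] => Or.inr (Or.inr List.Lex.nil)
  | a :: l, b :: m =>
    match lt_trichotomy a b with
    | Or.inl h => Or.inl (List.Lex.rel h)
    | Or.inr (Or.inr h) => Or.inr (Or.inr (List.Lex.rel h))
    | Or.inr (Or.inl h) => by
      subst h
      rcases llt_trichotomy l m with h | h | h
      · exact Or.inl (List.Lex.cons h)
      · exact Or.inr (Or.inl (by rw [h]))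
      · exact Or.inr (Or.inr (List.Lex.cons h))

lemma lyndon_of_length_one {l : List α} (h : l.length = 1) : IsLyndon l :=
  ⟨List.ne_nil_of_length_pos (by omega), fun k hk1 hk2 => absurd hk2 (by omega)⟩

/-- Concatenation of Lyndon words: if `u ≺ z` are Lyndon, so is `u ++ z`. -/
lemma lyndon_append {u z : List α} (hu : IsLyndon u) (hz : IsLyndon z) (h : Llt u z) :
    IsLyndon (u ++ z) := by
  obtain ⟨hune, hus⟩ := hu
  obtain ⟨hzne, hzs⟩ := hz
  have hul : 0 < u.length := List.length_pos_iff.2 hune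
  have hzl : 0 < z.length := List.length_pos_iff.2 hzne
  refine ⟨by simp [hune], fun k hk1 hk2 => ?_⟩
  rw [List.drop_append]
  rcases lt_trichotomy k u.length with hk | hk | hk
  · -- suffix starts inside u
    have h1 : Llt u (u.drop k) := hus k hk1 hk
    have h2 : (u.drop k).length ≤ u.length := by simp
    have := llt_append_of_llt_of_le h1 h2 z (z.drop (k - u.length))
    simpa [Nat.sub_eq_zero_of_le (le_of_lt hk)] using this
  · -- suffix is exactly z
    subst hk
    simp only [List.drop_length, List.nil_append, Nat.sub_self, List.drop_zero]
    rcases llt_decomp h with ⟨b, w, rfl⟩ | ⟨c, a, b, u', v', hab, rfl, rfl⟩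
    · -- z = u ++ b :: w : need u ++ z ≺ z, i.e. z ≺ b :: w
      rw [llt_append_left_iff u]
      have : Llt (u ++ b :: w) ((u ++ b :: w).drop u.length) := by
        apply hzs u.length (by omega)
        simp
      simpa using this
    · simp only [List.append_assoc, List.cons_append]
      exact llt_ext hab _ _ _
  · -- suffix starts inside z
    have hdz : u.drop k = [] := List.drop_eq_nil_of_le (le_of_lt hk)
    rw [hdz, List.nil_append]
    set k' := k - u.length with hk'
    have hk'1 : 0 < k' := by omega
    have hk'2 : k' < z.length := by simp at hk2; omega
    have hzk : Llt z (z.drop k') := hzs k' hk'1 hk'2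
    have huz : Llt u (z.drop k') := llt_trans h hzk
    rcases llt_decomp huz with ⟨b, w, hw⟩ | ⟨c, a, b, u', v', hab, hu', hv'⟩
    · -- z.drop k' = u ++ b :: w
      rw [hw, llt_append_left_iff u]
      have hdd : b :: w = z.drop (u.length + k') := by
        have h1 : (z.drop k').drop u.length = b :: w := by
          rw [hw, List.drop_append_of_le_length le_rfl]
          simp
        rw [← h1, List.drop_drop, Nat.add_comm]
      rw [hdd]
      apply hzs (u.length + k') (by omega)
      have hlen := congrArg List.length hw
      simp only [List.length_drop, List.length_append, List.length_cons] at hlen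
      omega
    · rw [hu', hv']
      simp only [List.append_assoc, List.cons_append]
      exact llt_ext hab _ _ _

/-- Main lemma: compatibility for maximal Lyndon prefixes, phrased on plain lists. -/
lemma maxLyndonPrefix_compat :
    ∀ (N : ℕ) (s t : List α) (p q : ℕ), s.length ≤ N →
    1 ≤ p → p ≤ s.length → IsLyndon (s.take p) →
    (∀ p', p < p' → p' ≤ s.length → ¬ IsLyndon (s.take p')) →
    1 ≤ q → q ≤ t.length → IsLyndon (t.take q) →
    Llt (s.take p) (t.take q) → Llt s t := by
  intro N
  induction N with
  | zero => intro s t p q hN hp1 hp2 _ _ _ _ _ _; omega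
  | succ N ih =>
    intro s t p q hN hp1 hp2 hLu hmax hq1 hq2 hLv hlt
    have hul : (s.take p).length = p := by simp; omega
    have hvl : (t.take q).length = q := by simp; omega
    have hs : s = s.take p ++ s.drop p := (List.take_append_drop _ _).symm
    have ht : t = t.take q ++ t.drop q := (List.take_append_drop _ _).symm
    rcases llt_decomp hlt with ⟨b, w, hvw⟩ | ⟨c, a, b', u', v', hab, hu, hv⟩
    · -- the max Lyndon prefix of s is a proper prefix of that of t
      have hpq : p < q := by
        have := congrArg List.length hvw
        simp [hul, hvl] at this
        omega
      have htu : t = s.take p ++ ((b :: w) ++ t.drop q) := by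
        conv_lhs => rw [ht, hvw]
        rw [List.append_assoc]
      by_cases hsp : s.drop p = []
      · -- s equals its Lyndon prefix, a proper prefix of t
        have hslen : s.length ≤ p := by
          have h0 : s.length - p = 0 := by rw [← List.length_drop, hsp]; rfl
          omega
        have hsu : s.take p = s := List.take_of_length_le hslen
        have hgoal : Llt (s.take p) (s.take p ++ b :: (w ++ t.drop q)) :=
          llt_append_cons _ _ _
        rw [htu]
        simpa [hsu] using hgoal
      · -- s' := s.drop p is nonempty; take its maximal Lyndon prefix
        set s' := s.drop p with hs'def
        have hs'len : s'.length = s.length - p := by simp [s']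
        have hs'pos : 0 < s'.length := List.length_pos_iff.2 hsp
        classical
        set P : ℕ → Prop := fun m => IsLyndon (s'.take m) with hP
        have h1P : P 1 := lyndon_of_length_one (by simp; omega)
        set p₂ := Nat.findGreatest P s'.length with hp₂def
        have h1le : 1 ≤ p₂ := Nat.le_findGreatest (by omega) h1P
        have hp₂le : p₂ ≤ s'.length := Nat.findGreatest_le _
        have hLu₂ : IsLyndon (s'.take p₂) := Nat.findGreatest_spec (by omega : 1 ≤ s'.length) h1P
        have hmax₂ : ∀ m, p₂ < m → m ≤ s'.length → ¬ IsLyndon (s'.take m) :=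
          fun m h1 h2 => Nat.findGreatest_is_greatest h1 h2
        rcases llt_trichotomy (s'.take p₂) (t.take q) with h2 | h2 | h2
        · -- u₂ ≺ v : use induction hypothesis and transitivity
          have hrec : Llt s' t := ih s' t p₂ q (by omega) h1le hp₂le hLu₂ hmax₂ hq1 hq2 hLv h2
          -- t ≺ (b::w) ++ t.drop q  (v Lyndon, drop p of v = b::w)
          have hvd : (t.take q).drop p = b :: w := by
            have h0 : (t.take q).drop p
                = (s.take p).drop p ++ (b :: w).drop (p - (s.take p).length) := by
              rw [hvw, List.drop_append]
            rw [h0, hul, Nat.sub_self, List.drop_zero, List.drop_eq_nil_of_le hul.le,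
              List.nil_append]
          have hvlt : Llt (t.take q) (b :: w) := by
            have := hLv.2 p (by omega) (by omega)
            rwa [hvd] at this
          have hwlen : (b :: w).length ≤ (t.take q).length := by
            have := congrArg List.length hvw
            simp only [List.length_append, List.length_cons, hul, hvl] at this ⊢
            omega
          have h2' : Llt (t.take q ++ t.drop q) ((b :: w) ++ t.drop q) :=
            llt_append_of_llt_of_le hvlt hwlen _ _
          rw [← ht] at h2'
          have h3 : Llt s' ((b :: w) ++ t.drop q) := llt_trans hrec h2'
          have h4 : Llt (s.take p ++ s.drop p) (s.take p ++ ((b :: w) ++ t.drop q)) :=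
            (llt_append_left_iff _).2 h3
          rw [List.take_append_drop] at h4
          rw [htu]
          exact h4
        · -- v = u₂ : contradiction with maximality at s
          exfalso
          have huu₂ : Llt (s.take p) (s'.take p₂) := by rw [h2]; exact hlt
          have : IsLyndon (s.take p ++ s'.take p₂) := lyndon_append hLu hLu₂ huu₂
          have heq : s.take p ++ s'.take p₂ = s.take (p + p₂) := (List.take_add (l := s) (i := p) (j := p₂)).symm
          rw [heq] at this
          exact hmax (p + p₂) (by omega) (by omega) this
        · -- v ≺ u₂ : contradiction with maximality at s
          exfalso
          have huu₂ : Llt (s.take p) (s'.take p₂) := llt_trans hlt h2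
          have : IsLyndon (s.take p ++ s'.take p₂) := lyndon_append hLu hLu₂ huu₂
          have heq : s.take p ++ s'.take p₂ = s.take (p + p₂) := (List.take_add (l := s) (i := p) (j := p₂)).symm
          rw [heq] at this
          exact hmax (p + p₂) (by omega) (by omega) this
    · -- mismatch between the two Lyndon prefixes: extends to the suffixes
      rw [hs, ht, hu, hv]
      simp only [List.append_assoc, List.cons_append]
      exact llt_ext hab _ _ _

/-- Compatibility property of the Lyndon array: if `mᵢ = λ[i]` and `mⱼ = λ[j]` and the
maximal Lyndon subword starting at `i` is lexicographically smaller than the one starting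
at `j`, then `x_i ≺ x_j`. -/
theorem lyndon_array_compatibility {α : Type*} [LinearOrder α] (x : List α) (n i j mi mj : ℕ)
    (hn : n = x.length)
    (hi1 : 1 ≤ i) (hin : i ≤ n) (hj1 : 1 ≤ j) (hjn : j ≤ n)
    (hmi1 : 1 ≤ mi) (hmi2 : mi ≤ n - i + 1)
    (hLi : IsLyndon (sub x i (i + mi - 1)))
    (hmaxi : ∀ m', mi < m' → m' ≤ n - i + 1 → ¬ IsLyndon (sub x i (i + m' - 1)))
    (hmj1 : 1 ≤ mj) (hmj2 : mj ≤ n - j + 1)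
    (hLj : IsLyndon (sub x j (j + mj - 1)))
    (hmaxj : ∀ m', mj < m' → m' ≤ n - j + 1 → ¬ IsLyndon (sub x j (j + m' - 1)))
    (hlt : Llt (sub x i (i + mi - 1)) (sub x j (j + mj - 1))) :
    Llt (suff x i) (suff x j) := by
  have hsubi : ∀ m, 1 ≤ m → sub x i (i + m - 1) = (suff x i).take m := by
    intro m hm
    unfold sub suff
    congr 1
    omega
  have hsubj : ∀ m, 1 ≤ m → sub x j (j + m - 1) = (suff x j).take m := by
    intro m hm
    unfold sub suff
    congr 1
    omega
  have hsl : (suff x i).length = n - i + 1 := by simp [suff]; omega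
  have htl : (suff x j).length = n - j + 1 := by simp [suff]; omega
  rw [hsubi mi hmi1] at hLi hlt
  rw [hsubj mj hmj1] at hLj hlt
  refine maxLyndonPrefix_compat (suff x i).length (suff x i) (suff x j) mi mj le_rfl
    hmi1 (by omega) hLi ?_ hmj1 (by omega) hLj hlt
  intro p' hp1 hp2
  rw [← hsubi p' (by omega)]
  exact hmaxi p' hp1 (by omega)

end LynArr
end
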